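/- The number of t-core partitions of n equals the number of integer vectors (m_1,...,m_t) ∈ ℤ^t with m_1 + ... + m_t = 0 and t·Σ_{j=1}^t m_j(m_j − 1)/2 + Σ_{j=1}^t j·m_j = n. -/

import Mathlib

open Filter

/-- A partition represented as a weakly decreasing, eventually zero sequence of parts
(0-indexed: `f i` is the (i+1)-st part). -/
def IsPartition (f : ℕ → ℕ) : Prop :=
  Antitone f ∧ ∀ᶠ i in atTop, f i = 0

/-- The size `|λ|` of a partition. -/
noncomputable def psize (f : ℕ → ℕ) : ℕ := ∑' i, f i

/-- The conjugate partition: `conj f j` is the number of parts of `f` exceeding `j`,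
i.e. the (j+1)-st column length. -/
noncomputable def conj (f : ℕ → ℕ) : ℕ → ℕ := fun j => Nat.card {i : ℕ // j < f i}

/-- The Durfee square size: the number of indices `i` with `λ_{i+1} ≥ i+1`. -/
noncomputable def durfee (f : ℕ → ℕ) : ℕ := Nat.card {i : ℕ // i < f i}

/-- Top Frobenius entry `a_{i+1} = λ_{i+1} - (i+1)` (0-indexed). -/
noncomputable def frobA (f : ℕ → ℕ) (i : ℕ) : ℕ := f i - (i + 1)

/-- Bottom Frobenius entry `b_{i+1} = λ'_{i+1} - (i+1)` (0-indexed). -/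
noncomputable def frobB (f : ℕ → ℕ) (i : ℕ) : ℕ := conj f i - (i + 1)

/-- Hook length of the (0-indexed) box `(i,j)` (valid when `j < f i`):
`h = (λ_i - j) + (λ'_j - i) - 1` in 1-indexed terms, which equals
`(λ_i - i) + (λ'_j - j) + 1`. -/
noncomputable def hook (f : ℕ → ℕ) (i j : ℕ) : ℕ :=
  (f i - (j + 1)) + (conj f j - (i + 1)) + 1

/-- A `t`-core partition: no hook length divisible by `t`. -/
def IsTCore (t : ℕ) (f : ℕ → ℕ) : Prop :=
  IsPartition f ∧ ∀ i j, j < f i → ¬ t ∣ hook f i j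

namespace Core8

/-- The bead sequence of a partition. -/
def xseq (f : ℕ → ℕ) (i : ℕ) : ℤ := (f i : ℤ) - i - 1

/-- The gap sequence of a partition. -/
noncomputable def yseq (f : ℕ → ℕ) (j : ℕ) : ℤ := (j : ℤ) - conj f j

lemma exists_bound {f : ℕ → ℕ} (hf : IsPartition f) :
    ∃ K, ∀ i, K ≤ i → f i = 0 := by
  simpa using eventually_atTop.mp hf.2

lemma xseq_strictAnti {f : ℕ → ℕ} (hf : IsPartition f) : StrictAnti (xseq f) := by
  apply strictAnti_nat_of_succ_lt
  intro n
  have h : f (n+1) ≤ f n := hf.1 (Nat.le_succ n)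
  unfold xseq
  push_cast
  omega

/-- Characterization of the conjugate partition. -/
lemma lt_conj_iff {f : ℕ → ℕ} (hf : IsPartition f) {j i : ℕ} :
    i < conj f j ↔ j < f i := by
  obtain ⟨K, hK⟩ := exists_bound hf
  have hex : ∃ i, f i ≤ j := ⟨K, by simp [hK K le_rfl]⟩
  classical
  set M := Nat.find hex with hM
  have key : ∀ i, j < f i ↔ i < M := by
    intro i
    constructor
    · intro h
      by_contra hi
      push_neg at hi
      have h1 : f i ≤ f M := hf.1 hi
      have h2 : f M ≤ j := Nat.find_spec hex
      omega
    · intro h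
      have := Nat.find_min hex h
      omega
  have hset : {i : ℕ | j < f i} = Set.Iio M := Set.ext fun i => key i
  have hconj : conj f j = M := by
    have : conj f j = Nat.card (Set.Iio M : Set ℕ) := by
      unfold conj
      congr 1
      exact congrArg Set.Elem hset
    rw [this]
    simp [Nat.card_coe_set_eq, Set.ncard_eq_toFinset_card']
  rw [hconj]
  exact (key i).symm

lemma yseq_lt_xseq_iff {f : ℕ → ℕ} (hf : IsPartition f) {i j : ℕ} :
    yseq f j < xseq f i ↔ j < f i := by
  unfold yseq xseq
  constructor
  · intro h
    by_contra hc
    push_neg at hc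
    have h2 : ¬ i < conj f j := by rw [lt_conj_iff hf]; omega
    push_neg at h2
    have : (conj f j : ℤ) ≤ i := by exact_mod_cast h2
    have : (f i : ℤ) ≤ j := by exact_mod_cast hc
    omega
  · intro h
    have h2 : i < conj f j := (lt_conj_iff hf).mpr h
    have : (i : ℤ) + 1 ≤ conj f j := by exact_mod_cast h2
    have : (j : ℤ) + 1 ≤ f i := by exact_mod_cast h
    omega

lemma xseq_ne_yseq {f : ℕ → ℕ} (hf : IsPartition f) (i j : ℕ) :
    xseq f i ≠ yseq f j := by
  rcases lt_or_ge j (f i) with h | h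
  · have := (yseq_lt_xseq_iff hf).mpr h
    omega
  · have h2 : ¬ i < conj f j := by rw [lt_conj_iff hf]; omega
    push_neg at h2
    unfold yseq xseq
    have : (conj f j : ℤ) ≤ i := by exact_mod_cast h2
    have : (f i : ℤ) ≤ j := by exact_mod_cast h
    omega

/-- every integer is a bead or a gap -/
lemma cover {f : ℕ → ℕ} (hf : IsPartition f) (z : ℤ) :
    (∃ i, xseq f i = z) ∨ (∃ j, yseq f j = z) := by
  classical
  obtain ⟨K, hK⟩ := exists_bound hf
  have hex : ∃ i, xseq f i ≤ z := by
    refine ⟨K + (-z-1).toNat, ?_⟩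
    have h0 : f (K + (-z-1).toNat) = 0 := hK _ (by omega)
    unfold xseq
    rw [h0]
    push_cast
    have := Int.self_le_toNat (-z-1)
    omega
  set i₀ := Nat.find hex with hi₀
  have hle : xseq f i₀ ≤ z := Nat.find_spec hex
  rcases eq_or_lt_of_le hle with he | hlt
  · exact Or.inl ⟨i₀, he⟩
  right
  -- helper to identify conj value
  have conj_eq : ∀ (jj M : ℕ), (∀ i, jj < f i ↔ i < M) → conj f jj = M := by
    intro jj M h
    have h1 := (lt_conj_iff hf (j := jj) (i := M))
    have h2 := (lt_conj_iff hf (j := jj) (i := conj f jj))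
    have h3 := h M
    have h4 := h (conj f jj)
    omega
  rcases Nat.eq_zero_or_pos i₀ with h0 | hpos
  · -- z > xseq f 0, so z ≥ f 0
    have hx0 : xseq f 0 < z := h0 ▸ hlt
    have hz0 : (f 0 : ℤ) ≤ z := by unfold xseq at hx0; omega
    refine ⟨z.toNat, ?_⟩
    have hzn : (z.toNat : ℤ) = z := Int.toNat_of_nonneg (by omega)
    have hc : conj f z.toNat = 0 := by
      apply conj_eq
      intro i
      simp only [Nat.not_lt_zero, iff_false, not_lt]
      have hfi : f i ≤ f 0 := hf.1 (Nat.zero_le i)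
      have : (f i : ℤ) ≤ z := le_trans (by exact_mod_cast hfi) hz0
      omega
    unfold yseq
    rw [hc, hzn]
    simp
  · -- i₀ = i' + 1
    obtain ⟨i', hi'⟩ : ∃ i', i₀ = i' + 1 := ⟨i₀ - 1, by omega⟩
    rw [hi'] at hlt
    have hprev : ¬ xseq f i' ≤ z := Nat.find_min hex (by omega)
    push_neg at hprev
    -- z + i₀ ≥ 0
    have hxlow : -(i' : ℤ) - 2 ≤ xseq f (i' + 1) := by unfold xseq; push_cast; omega
    have hznn : 0 ≤ z + (i' + 1 : ℤ) := by omega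
    refine ⟨(z + (i' + 1 : ℤ)).toNat, ?_⟩
    have hzn : ((z + (i' + 1 : ℤ)).toNat : ℤ) = z + (i' + 1) := Int.toNat_of_nonneg hznn
    have hc : conj f (z + (i' + 1 : ℤ)).toNat = i' + 1 := by
      apply conj_eq
      intro i
      constructor
      · intro h
        by_contra hi
        push_neg at hi
        have hfi : f i ≤ f (i' + 1) := hf.1 hi
        have h1 : (f (i'+1) : ℤ) ≤ z + (i' + 1) := by unfold xseq at hlt; omega
        have h2 : ((z + (i' + 1 : ℤ)).toNat : ℤ) < f i := by exact_mod_cast h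
        have : (f i : ℤ) ≤ f (i' + 1) := by exact_mod_cast hfi
        omega
      · intro h
        have hfi : f i' ≤ f i := hf.1 (by omega)
        have h1 : z + (i' : ℤ) + 2 ≤ f i' := by unfold xseq at hprev; omega
        have : (f i' : ℤ) ≤ f i := by exact_mod_cast hfi
        have : ((z + (i' + 1 : ℤ)).toNat : ℤ) < f i := by omega
        exact_mod_cast this
    unfold yseq
    rw [hc, hzn]
    push_cast
    ring


/-- cast of hook length -/
lemma hook_cast {f : ℕ → ℕ} (hf : IsPartition f) {i j : ℕ} (h : j < f i) :
    (hook f i j : ℤ) = xseq f i - yseq f j := by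
  have h2 : i < conj f j := (lt_conj_iff hf).mpr h
  unfold hook xseq yseq
  have h3 : j + 1 ≤ f i := h
  have h4 : i + 1 ≤ conj f j := h2
  push_cast [Nat.cast_sub h3, Nat.cast_sub h4]
  ring

/-- characterization of t-cores via beads -/
lemma isTCore_iff {t : ℕ} (ht : 0 < t) {f : ℕ → ℕ} (hf : IsPartition f) :
    IsTCore t f ↔ ∀ i, ∃ i', xseq f i' = xseq f i - t := by
  constructor
  · rintro ⟨-, hcore⟩ i
    rcases cover hf (xseq f i - t) with ⟨i', h⟩ | ⟨j, h⟩
    · exact ⟨i', h⟩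
    exfalso
    have hyx : yseq f j < xseq f i := by omega
    have hj : j < f i := (yseq_lt_xseq_iff hf).mp hyx
    have hh : (hook f i j : ℤ) = t := by rw [hook_cast hf hj]; omega
    have hhn : hook f i j = t := by exact_mod_cast hh
    exact hcore i j hj (hhn ▸ dvd_refl t)
  · intro hcl
    refine ⟨hf, fun i j hj hdvd => ?_⟩
    obtain ⟨d, hd⟩ := hdvd
    have hpos : 0 < hook f i j := by unfold hook; omega
    have hyx : yseq f j < xseq f i := (yseq_lt_xseq_iff hf).mpr hj
    have hdz : (hook f i j : ℤ) = t * d := by exact_mod_cast hd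
    have hcast := hook_cast hf hj
    -- xseq f i - t*d = yseq f j, d ≥ 1
    have hd1 : 1 ≤ d := by
      rcases Nat.eq_zero_or_pos d with h0 | h1
      · subst h0; omega
      · exact h1
    have key : ∀ e : ℕ, ∃ i', xseq f i' = xseq f i - t * e := by
      intro e
      induction e with
      | zero => exact ⟨i, by simp⟩
      | succ e ih =>
        obtain ⟨i', hi'⟩ := ih
        obtain ⟨i'', hi''⟩ := hcl i'
        exact ⟨i'', by rw [hi'', hi']; push_cast; ring⟩
    obtain ⟨i', hi'⟩ := key d
    have : xseq f i' = yseq f j := by push_cast at hi'; omega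
    exact xseq_ne_yseq hf i' j this

/-- two strictly antitone sequences with the same range are equal -/
lemma strictAnti_range_eq {u v : ℕ → ℤ} (hu : StrictAnti u) (hv : StrictAnti v)
    (h : Set.range u = Set.range v) : u = v := by
  have main : ∀ i, u i = v i := by
    intro i
    induction i using Nat.strong_induction_on with
    | _ i ih =>
      have h1 : u i ∈ Set.range v := h ▸ Set.mem_range_self i
      obtain ⟨k, hk⟩ := h1
      have h2 : v i ∈ Set.range u := h.symm ▸ Set.mem_range_self i
      obtain ⟨l, hl⟩ := h2
      have hki : i ≤ k := by
        by_contra hc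
        push_neg at hc
        have he : u k = v k := ih k hc
        have : u k = u i := he.trans hk
        have := hu.injective this
        omega
      have hli : i ≤ l := by
        by_contra hc
        push_neg at hc
        have he : u l = v l := ih l hc
        have : v l = v i := he.symm.trans hl
        have := hv.injective this
        omega
      have h1 : u i ≤ v i := hk ▸ hv.antitone hki
      have h2 : v i ≤ u i := hl ▸ hu.antitone hli
      omega
  funext i; exact main i

/-- downward closed sets -/
lemma mem_of_le_of_closed {S : Set ℤ} (hS : ∀ k ∈ S, k - 1 ∈ S) {a b : ℤ}
    (ha : a ∈ S) (h : b ≤ a) : b ∈ S := by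
  obtain ⟨n, hn⟩ : ∃ n : ℕ, b = a - n := ⟨(a - b).toNat, by omega⟩
  subst hn
  induction n with
  | zero => simpa using ha
  | succ n ih =>
    have : a - (n + 1 : ℕ) = (a - n) - 1 := by push_cast; ring
    rw [this]
    exact hS _ (ih (by omega))

section Runner

variable {t : ℕ}

/-- residue of an integer, as `Fin t` -/
def resFin (ht : 0 < t) (z : ℤ) : Fin t :=
  ⟨(z % t).toNat, by
    have h1 : 0 ≤ z % (t : ℤ) := Int.emod_nonneg z (by exact_mod_cast ht.ne')
    have h2 : z % (t : ℤ) < t := Int.emod_lt_of_pos z (by exact_mod_cast ht)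
    omega⟩

lemma coe_resFin (ht : 0 < t) (z : ℤ) : ((resFin ht z : ℕ) : ℤ) = z % t := by
  have h1 : 0 ≤ z % (t : ℤ) := Int.emod_nonneg z (by exact_mod_cast ht.ne')
  simp [resFin]
  omega

lemma resFin_mul_add (ht : 0 < t) (k : ℤ) (r : Fin t) : resFin ht (t * k + r) = r := by
  have h1 : ((t : ℤ) * k + r) % t = r := by
    rw [add_comm, Int.add_mul_emod_self_left]
    exact Int.emod_eq_of_lt (by positivity) (by exact_mod_cast r.isLt)
  apply Fin.ext
  have := coe_resFin ht ((t : ℤ) * k + r)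
  rw [h1] at this
  exact_mod_cast this

lemma ediv_mul_add (ht : 0 < t) (k : ℤ) (r : Fin t) : ((t : ℤ) * k + r) / t = k := by
  rw [add_comm, Int.add_mul_ediv_left _ _ (by exact_mod_cast ht.ne' : (t:ℤ) ≠ 0)]
  rw [Int.ediv_eq_zero_of_lt (by positivity) (by exact_mod_cast r.isLt)]
  ring

lemma self_eq_mul_add (ht : 0 < t) (z : ℤ) : (t : ℤ) * (z / t) + (resFin ht z : ℕ) = z := by
  rw [coe_resFin ht]
  exact Int.mul_ediv_add_emod z t

/-- window finset: for each residue r, positions t*k+r with a r ≤ k < b r -/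
noncomputable def windowFin (ht : 0 < t) (a b : Fin t → ℤ) : Finset ℤ :=
  Finset.univ.biUnion fun r : Fin t =>
    (Finset.Ico (a r) (b r)).image fun k => (t : ℤ) * k + (r : ℕ)

lemma mem_windowFin (ht : 0 < t) {a b : Fin t → ℤ} {z : ℤ} :
    z ∈ windowFin ht a b ↔ a (resFin ht z) ≤ z / t ∧ z / t < b (resFin ht z) := by
  unfold windowFin
  simp only [Finset.mem_biUnion, Finset.mem_univ, true_and, Finset.mem_image,
    Finset.mem_Ico]
  constructor
  · rintro ⟨r, k, ⟨h1, h2⟩, rfl⟩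
    rw [resFin_mul_add ht, ediv_mul_add ht]
    exact ⟨h1, h2⟩
  · rintro ⟨h1, h2⟩
    exact ⟨resFin ht z, z / t, ⟨h1, h2⟩, self_eq_mul_add ht z⟩

lemma windowFin_disj (ht : 0 < t) {a b : Fin t → ℤ} {r s : Fin t} (hrs : r ≠ s) :
    Disjoint ((Finset.Ico (a r) (b r)).image fun k => (t : ℤ) * k + (r : ℕ))
      ((Finset.Ico (a s) (b s)).image fun k => (t : ℤ) * k + (s : ℕ)) := by
  rw [Finset.disjoint_left]
  rintro z hz hz'
  simp only [Finset.mem_image, Finset.mem_Ico] at hz hz'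
  obtain ⟨k, -, rfl⟩ := hz
  obtain ⟨k', -, he⟩ := hz'
  have := resFin_mul_add ht k r
  rw [← he, resFin_mul_add ht] at this
  exact hrs (this ▸ rfl)

lemma injOn_mul_add (ht : 0 < t) {a₀ b₀ : ℤ} (r : Fin t) :
    ∀ x ∈ Finset.Ico a₀ b₀, ∀ y ∈ Finset.Ico a₀ b₀,
      ((t : ℤ) * x + (r : ℕ) = (t : ℤ) * y + (r : ℕ)) → x = y := by
  intro x _ y _ h
  have ht' : (t : ℤ) ≠ 0 := by exact_mod_cast ht.ne'
  have : (t : ℤ) * x = t * y := by omega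
  exact mul_left_cancel₀ ht' this

set_option maxHeartbeats 1000000 in
lemma card_windowFin (ht : 0 < t) {a b : Fin t → ℤ} :
    (windowFin ht a b).card = ∑ r : Fin t, (b r - a r).toNat := by
  unfold windowFin
  rw [Finset.card_biUnion]
  · refine Finset.sum_congr rfl fun r _ => ?_
    rw [Finset.card_image_of_injOn]
    · exact Int.card_Ico _ _
    · intro x hx y hy h
      exact injOn_mul_add ht r x hx y hy h
  · exact fun x _ y _ hxy => windowFin_disj ht hxy

set_option maxHeartbeats 1000000 in
lemma sum_windowFin (ht : 0 < t) {a b : Fin t → ℤ} :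
    ∑ z ∈ windowFin ht a b, z
      = ∑ r : Fin t, ∑ k ∈ Finset.Ico (a r) (b r), ((t : ℤ) * k + (r : ℕ)) := by
  unfold windowFin
  rw [Finset.sum_biUnion]
  · refine Finset.sum_congr rfl fun r _ => ?_
    exact Finset.sum_image (injOn_mul_add ht r)
  · exact fun x _ y _ hxy => windowFin_disj ht hxy

/-- Gauss sum over an integer interval -/
lemma gauss_Ico (a : ℤ) : ∀ b : ℤ, a ≤ b →
    2 * ∑ k ∈ Finset.Ico a b, k = (b - a) * (a + b - 1) := by
  refine Int.le_induction ?_ ?_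
  · simp
  · intro b hb ih
    have hins : Finset.Ico a (b + 1) = insert b (Finset.Ico a b) := by
      ext x
      simp only [Finset.mem_Ico, Finset.mem_insert]
      omega
    rw [hins, Finset.sum_insert (by simp [Finset.mem_Ico])]
    ring_nf
    ring_nf at ih
    linarith

end Runner

section Size

variable {t : ℕ}

lemma gauss_range (K : ℕ) : 2 * ∑ i ∈ Finset.range K, ((i : ℤ) + 1) = (K : ℤ) * (K + 1) := by
  induction K with
  | zero => simp
  | succ K ih =>
    rw [Finset.sum_range_succ]
    push_cast
    linear_combination ih

/-- Main counting lemma: charge 0 and the size formula. -/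
lemma charge_and_size (ht : 0 < t) {f : ℕ → ℕ} (hf : IsPartition f) (c : Fin t → ℤ)
    (hX : ∀ z : ℤ, (∃ i, xseq f i = z) ↔ z / t < c (resFin ht z)) :
    (∑ r, c r) = 0 ∧
      2 * (psize f : ℤ) =
        ∑ r : Fin t, ((t : ℤ) * (c r * (c r - 1)) + 2 * (((r : ℕ) : ℤ) + 1) * c r) := by
  classical
  have htz : (0 : ℤ) < t := by exact_mod_cast ht
  obtain ⟨K', hK'⟩ := exists_bound hf
  set K₀ : ℕ := K' + 1 with hK₀def
  set K : ℕ := t * K₀ with hKdef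
  have hK₀K : K₀ ≤ K := Nat.le_mul_of_pos_left K₀ ht
  have hfK : ∀ i, K ≤ i → f i = 0 := fun i hi => hK' i (by omega)
  have hK1 : 1 ≤ K := le_trans (by omega) hK₀K
  have hKc : (K : ℤ) = (t : ℤ) * K₀ := by push_cast [hKdef]; ring
  -- psize as finite sum
  have hpsize : (psize f : ℤ) = ∑ i ∈ Finset.range K, (f i : ℤ) := by
    have h1 : psize f = ∑ i ∈ Finset.range K, f i :=
      tsum_eq_sum (fun i hi => hfK i (by simp only [Finset.mem_range, not_lt] at hi; exact hi))
    rw [h1]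
    push_cast
    rfl
  -- window membership
  set W := windowFin ht (fun _ => -(K₀ : ℤ)) c with hWdef
  have hmemW : ∀ z : ℤ, z ∈ W ↔ ((∃ i, xseq f i = z) ∧ -(K : ℤ) ≤ z) := by
    intro z
    rw [hWdef, mem_windowFin ht, hX z]
    have hdiv : -(K₀ : ℤ) ≤ z / t ↔ -(K : ℤ) ≤ z := by
      rw [Int.le_ediv_iff_mul_le htz]
      constructor <;> intro h <;> [linarith [hKc]; linarith [hKc]]
    tauto
  have hmemE : ∀ z : ℤ, (∃ i, i < K ∧ xseq f i = z) ↔ ((∃ i, xseq f i = z) ∧ -(K : ℤ) ≤ z) := by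
    intro z
    constructor
    · rintro ⟨i, hiK, rfl⟩
      refine ⟨⟨i, rfl⟩, ?_⟩
      unfold xseq
      push_cast
      omega
    · rintro ⟨⟨i, rfl⟩, h2⟩
      refine ⟨i, ?_, rfl⟩
      by_contra hc
      push_neg at hc
      have h0 : f i = 0 := hfK i hc
      unfold xseq at h2
      rw [h0] at h2
      push_cast at h2
      omega
  have hEW : (Finset.range K).image (xseq f) = W := by
    ext z
    rw [hmemW z, ← hmemE z]
    simp only [Finset.mem_image, Finset.mem_range]
  -- injectivity
  have hinjOn : ∀ x ∈ Finset.range K, ∀ y ∈ Finset.range K, xseq f x = xseq f y → x = y :=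
    fun x _ y _ h => (xseq_strictAnti hf).injective h
  -- c r > -K₀
  have hcrlow : ∀ r : Fin t, -(K₀ : ℤ) < c r := by
    intro r
    have hrK : (r : ℕ) < K := lt_of_lt_of_le r.isLt (Nat.le_mul_of_pos_right t (by omega))
    have hiK' : K' ≤ K - 1 - (r : ℕ) := by
      have h1 : t * K' ≤ K - 1 - (r : ℕ) := by
        have : t * K₀ = t * K' + t := by rw [hK₀def]; ring
        omega
      have h2 : K' ≤ t * K' := Nat.le_mul_of_pos_left K' ht
      omega
    have hz : xseq f (K - 1 - (r : ℕ)) = (t : ℤ) * (-(K₀ : ℤ)) + ((r : Fin t) : ℕ) := by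
      unfold xseq
      rw [hK' _ hiK']
      push_cast
      have : ((K - 1 - (r:ℕ) : ℕ) : ℤ) = (K : ℤ) - 1 - (r : ℕ) := by
        have : (r : ℕ) ≤ K - 1 := by omega
        push_cast
        omega
      rw [this, hKc]
      push_cast
      ring
    have hmem : (∃ i, xseq f i = (t : ℤ) * (-(K₀ : ℤ)) + ((r : Fin t) : ℕ)) := ⟨_, hz⟩
    have := (hX _).mp hmem
    rwa [ediv_mul_add ht, resFin_mul_add ht] at this
  -- cardinality: charge
  have hcardW : W.card = ∑ r : Fin t, (c r + (K₀ : ℤ)).toNat := by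
    rw [hWdef, card_windowFin ht]
    refine Finset.sum_congr rfl fun r _ => ?_
    rw [sub_neg_eq_add]
  have hcardE : ((Finset.range K).image (xseq f)).card = K := by
    rw [Finset.card_image_of_injOn fun x hx y hy h => hinjOn x hx y hy h, Finset.card_range]
  have hcharge : (∑ r, c r) = 0 := by
    have h1 : (K : ℤ) = ∑ r : Fin t, (c r + (K₀ : ℤ)) := by
      have h2 : (K : ℤ) = ((∑ r : Fin t, (c r + (K₀ : ℤ)).toNat : ℕ) : ℤ) := by
        rw [← hcardW, ← hEW, hcardE]
      rw [h2, Nat.cast_sum]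
      refine Finset.sum_congr rfl fun r _ => ?_
      exact Int.toNat_of_nonneg (by linarith [hcrlow r])
    rw [Finset.sum_add_distrib, Finset.sum_const, Finset.card_univ, Fintype.card_fin] at h1
    simp only [nsmul_eq_mul] at h1
    linarith [hKc]
  refine ⟨hcharge, ?_⟩
  -- the sum over beads
  have hsumE : ∑ i ∈ Finset.range K, xseq f i = ∑ z ∈ W, z := by
    rw [← hEW, Finset.sum_image hinjOn]
  have h2sumW : 2 * ∑ z ∈ W, z
      = ∑ r : Fin t, ((t : ℤ) * ((c r + K₀) * (c r - K₀ - 1)) + 2 * (c r + K₀) * ((r : ℕ) : ℤ)) := by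
    rw [hWdef, sum_windowFin ht, Finset.mul_sum]
    refine Finset.sum_congr rfl fun r _ => ?_
    have hle : -(K₀ : ℤ) ≤ c r := le_of_lt (hcrlow r)
    have hg := gauss_Ico (-(K₀ : ℤ)) (c r) hle
    rw [Finset.sum_add_distrib, ← Finset.mul_sum, Finset.sum_const, Int.card_Ico]
    have hcnn : ((c r - -(K₀:ℤ)).toNat : ℤ) = c r + K₀ := by
      rw [Int.toNat_of_nonneg (by linarith)]
      ring
    rw [nsmul_eq_mul, hcnn]
    linear_combination (t : ℤ) * hg
  -- putting it together
  have hmain : 2 * (psize f : ℤ)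
      = ∑ r : Fin t, ((t : ℤ) * ((c r + K₀) * (c r - K₀ - 1)) + 2 * (c r + K₀) * ((r : ℕ) : ℤ))
        + (K : ℤ) * (K + 1) := by
    rw [hpsize]
    have hfx : ∀ i ∈ Finset.range K, (f i : ℤ) = xseq f i + (i : ℤ) + 1 := by
      intro i _
      unfold xseq
      ring
    rw [Finset.sum_congr rfl hfx]
    have : ∑ i ∈ Finset.range K, (xseq f i + (i : ℤ) + 1)
        = ∑ i ∈ Finset.range K, xseq f i + ∑ i ∈ Finset.range K, ((i : ℤ) + 1) := by
      rw [← Finset.sum_add_distrib]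
      refine Finset.sum_congr rfl fun i _ => by ring
    rw [this]
    have hg2 := gauss_range K
    linear_combination h2sumW + hg2 + 2 * hsumE
  -- sum of residues
  have hSr : 2 * ∑ r : Fin t, ((r : ℕ) : ℤ) = (t : ℤ) * ((t : ℤ) - 1) := by
    rw [Fin.sum_univ_eq_sum_range (fun i => (i : ℤ)) t]
    have h2 : ((∑ i ∈ Finset.range t, i) * 2 : ℕ) = t * (t - 1) := Finset.sum_range_id_mul_two t
    zify [show 1 ≤ t from ht] at h2
    push_cast at h2
    linarith
  -- difference of the two sums
  have hdiffsum :
      ∑ r : Fin t, ((t : ℤ) * ((c r + K₀) * (c r - K₀ - 1)) + 2 * (c r + K₀) * ((r : ℕ) : ℤ))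
        - ∑ r : Fin t, ((t : ℤ) * (c r * (c r - 1)) + 2 * (((r : ℕ) : ℤ) + 1) * c r)
      = ∑ r : Fin t, (-(t : ℤ) * K₀ * (K₀ + 1) + 2 * (K₀ : ℤ) * ((r : ℕ) : ℤ) - 2 * c r) := by
    rw [← Finset.sum_sub_distrib]
    refine Finset.sum_congr rfl fun r _ => by ring
  have hdval : ∑ r : Fin t, (-(t : ℤ) * K₀ * (K₀ + 1) + 2 * (K₀ : ℤ) * ((r : ℕ) : ℤ) - 2 * c r)
      = (t : ℤ) * (-(t : ℤ) * K₀ * (K₀ + 1)) + 2 * (K₀ : ℤ) * (∑ r : Fin t, ((r : ℕ) : ℤ))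
        - 2 * ∑ r, c r := by
    rw [Finset.sum_sub_distrib, Finset.sum_add_distrib, Finset.sum_const, Finset.card_univ,
      Fintype.card_fin, ← Finset.mul_sum, ← Finset.mul_sum]
    simp only [nsmul_eq_mul]
    try ring
  rw [hcharge] at hdval
  linear_combination hmain + hdiffsum + hdval + (K₀ : ℤ) * hSr + ((K : ℤ) + (t : ℤ) * K₀ + 1) * hKc

end Size

section Forward

variable {t : ℕ}

lemma xseq_low {f : ℕ → ℕ} {K : ℕ} (hK : ∀ i, K ≤ i → f i = 0) :
    ∀ z : ℤ, z ≤ -(K : ℤ) - 1 → ∃ i, xseq f i = z := by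
  intro z hz
  refine ⟨(-z - 1).toNat, ?_⟩
  have h1 : ((-z - 1).toNat : ℤ) = -z - 1 := Int.toNat_of_nonneg (by omega)
  have h2 : K ≤ (-z - 1).toNat := by omega
  unfold xseq
  rw [hK _ h2]
  push_cast
  omega

/-- the runner parameter of a `t`-core -/
noncomputable def crun (t : ℕ) (f : ℕ → ℕ) (r : Fin t) : ℤ :=
  sSup {k : ℤ | ∃ i, xseq f i = (t : ℤ) * k + ((r : ℕ) : ℤ)} + 1

lemma int_eq_of_lt_iff {a b : ℤ} (h : ∀ k : ℤ, k < a ↔ k < b) : a = b := by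
  have h1 := h a
  have h2 := h b
  omega

lemma crun_spec (ht : 0 < t) {f : ℕ → ℕ} (hf : IsPartition f)
    (hcl : ∀ i, ∃ i', xseq f i' = xseq f i - t) (r : Fin t) (k : ℤ) :
    k < crun t f r ↔ ∃ i, xseq f i = (t : ℤ) * k + ((r : ℕ) : ℤ) := by
  have htz : (0 : ℤ) < t := by exact_mod_cast ht
  have hrt : ((r : ℕ) : ℤ) < t := by exact_mod_cast r.isLt
  have hr0 : (0 : ℤ) ≤ ((r : ℕ) : ℤ) := by positivity
  obtain ⟨K, hK⟩ := exists_bound hf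
  set S : Set ℤ := {k : ℤ | ∃ i, xseq f i = (t : ℤ) * k + ((r : ℕ) : ℤ)} with hSdef
  have hSne : S.Nonempty := by
    refine ⟨-((K : ℤ) + 1), xseq_low hK _ ?_⟩
    have h1 : (K : ℤ) + 1 ≤ (t : ℤ) * ((K : ℤ) + 1) := by nlinarith
    nlinarith
  have hSbdd : BddAbove S := by
    refine ⟨max (xseq f 0) 0, fun k hk => ?_⟩
    obtain ⟨i, hi⟩ := hk
    have h1 : xseq f i ≤ xseq f 0 := (xseq_strictAnti hf).antitone (Nat.zero_le i)
    rcases le_or_gt k 0 with h2 | h2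
    · exact le_trans h2 (le_max_right _ _)
    · have h3 : k ≤ (t : ℤ) * k := by nlinarith
      have h4 : k ≤ xseq f 0 := by omega
      exact le_trans h4 (le_max_left _ _)
  have hdown : ∀ x ∈ S, x - 1 ∈ S := by
    intro x hx
    obtain ⟨i, hi⟩ := hx
    obtain ⟨i', hi'⟩ := hcl i
    exact ⟨i', by rw [hi', hi]; ring⟩
  have hmem : sSup S ∈ S := Int.csSup_mem hSne hSbdd
  constructor
  · intro h
    exact mem_of_le_of_closed hdown hmem (by unfold crun at h; rw [← hSdef] at h; omega)
  · intro h
    have := le_csSup hSbdd h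
    unfold crun
    rw [← hSdef]
    omega

lemma range_iff_crun (ht : 0 < t) {f : ℕ → ℕ} (hf : IsPartition f)
    (hcl : ∀ i, ∃ i', xseq f i' = xseq f i - t) (z : ℤ) :
    (∃ i, xseq f i = z) ↔ z / t < crun t f (resFin ht z) := by
  rw [crun_spec ht hf hcl (resFin ht z) (z / t), self_eq_mul_add ht z]

end Forward

section Backward

variable {t : ℕ}

/-- the bead set associated to a vector `m` -/
def Xset (ht : 0 < t) (m : Fin t → ℤ) : Set ℤ := {z : ℤ | z / t < m (resFin ht z)}

/-- enumerate a subset of `ℤ` in decreasing order -/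
noncomputable def enum (X : Set ℤ) : ℕ → ℤ
  | 0 => sSup X
  | (i + 1) => sSup (X ∩ Set.Iio (enum X i))

section EnumBasic

variable {X : Set ℤ} {N₀ : ℤ} (hbdd : BddAbove X) (hlow : ∀ z : ℤ, z ≤ N₀ → z ∈ X)

include hbdd hlow

lemma enum_mem : ∀ i, enum X i ∈ X := by
  intro i
  cases i with
  | zero =>
    exact Int.csSup_mem ⟨N₀, hlow N₀ le_rfl⟩ hbdd
  | succ i =>
    have h : (X ∩ Set.Iio (enum X i)).Nonempty :=
      ⟨min N₀ (enum X i) - 1, hlow _ (by omega), by simp only [Set.mem_Iio]; omega⟩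
    exact (Int.csSup_mem h (hbdd.mono Set.inter_subset_left)).1

lemma enum_succ_lt : ∀ i, enum X (i + 1) < enum X i := by
  intro i
  have h : (X ∩ Set.Iio (enum X i)).Nonempty :=
    ⟨min N₀ (enum X i) - 1, hlow _ (by omega), by simp only [Set.mem_Iio]; omega⟩
  exact (Int.csSup_mem h (hbdd.mono Set.inter_subset_left)).2

lemma enum_strictAnti : StrictAnti (enum X) :=
  strictAnti_nat_of_succ_lt (enum_succ_lt hbdd hlow)

lemma enum_zero_le : ∀ z ∈ X, z ≤ enum X 0 := fun z hz => le_csSup hbdd hz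

lemma enum_step : ∀ i, ∀ z ∈ X, z < enum X i → z ≤ enum X (i + 1) := by
  intro i z hz hlt
  exact le_csSup (hbdd.mono Set.inter_subset_left) ⟨hz, hlt⟩

lemma enum_above : ∀ i, ∀ z ∈ X, enum X i < z → ∃ j, j < i ∧ enum X j = z := by
  intro i
  induction i with
  | zero =>
    intro z hz hlt
    exact absurd (enum_zero_le hbdd hlow z hz) (by omega)
  | succ i ih =>
    intro z hz hlt
    rcases lt_trichotomy z (enum X i) with h | h | h
    · have := enum_step hbdd hlow i z hz h
      omega
    · exact ⟨i, by omega, h.symm⟩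
    · obtain ⟨j, hj, hje⟩ := ih z hz h
      exact ⟨j, by omega, hje⟩

lemma enum_le_sub : ∀ i, enum X i ≤ enum X 0 - i := by
  intro i
  induction i with
  | zero => simp
  | succ i ih =>
    have := enum_succ_lt hbdd hlow i
    push_cast
    omega

lemma enum_surj : ∀ z ∈ X, ∃ i, enum X i = z := by
  intro z hz
  by_contra hc
  push_neg at hc
  have hgt : ∀ i, z < enum X i := by
    intro i
    induction i with
    | zero => exact lt_of_le_of_ne (enum_zero_le hbdd hlow z hz) (Ne.symm (hc 0))
    | succ i ih =>
      exact lt_of_le_of_ne (enum_step hbdd hlow i z hz ih) (Ne.symm (hc (i + 1)))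
  have h1 := hgt (enum X 0 - z).toNat
  have h2 := enum_le_sub hbdd hlow (enum X 0 - z).toNat
  have h3 : ((enum X 0 - z).toNat : ℤ) ≥ enum X 0 - z := Int.self_le_toNat _
  omega

lemma enum_image_mem (i : ℕ) (z : ℤ) :
    z ∈ (Finset.range i).image (enum X) ↔ z ∈ X ∧ enum X i < z := by
  simp only [Finset.mem_image, Finset.mem_range]
  constructor
  · rintro ⟨j, hj, rfl⟩
    exact ⟨enum_mem hbdd hlow j, (enum_strictAnti hbdd hlow) hj⟩
  · rintro ⟨hz, hlt⟩
    obtain ⟨j, hj, hje⟩ := enum_above hbdd hlow i z hz hlt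
    exact ⟨j, hj, hje⟩

end EnumBasic

section XsetFacts

variable (ht : 0 < t) (m : Fin t → ℤ)

/-- global bound -/
def mbound (m : Fin t → ℤ) : ℕ := 1 + ∑ r, (m r).natAbs

lemma mbound_spec : ∀ r : Fin t, -((mbound m : ℕ) : ℤ) < m r ∧ m r < mbound m := by
  intro r
  have h1 : (m r).natAbs ≤ ∑ r', (m r').natAbs :=
    Finset.single_le_sum (f := fun r' => (m r').natAbs) (fun _ _ => Nat.zero_le _)
      (Finset.mem_univ r)
  have h2 : ((m r).natAbs : ℤ) ≤ ((∑ r', (m r').natAbs : ℕ) : ℤ) := by exact_mod_cast h1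
  unfold mbound
  omega

lemma Xset_bddAbove : BddAbove (Xset ht m) := by
  have htz : (0 : ℤ) < t := by exact_mod_cast ht
  refine ⟨(t : ℤ) * mbound m, fun z hz => ?_⟩
  have h1 : z / t < mbound m := lt_trans hz (mbound_spec m (resFin ht z)).2
  have h2 : z < ((mbound m : ℕ) : ℤ) * t := (Int.ediv_lt_iff_lt_mul htz).mp h1
  nlinarith

lemma Xset_low : ∀ z : ℤ, z ≤ -((t * mbound m : ℕ) : ℤ) - 1 → z ∈ Xset ht m := by
  intro z hz
  have htz : (0 : ℤ) < t := by exact_mod_cast ht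
  have h1 : z < (-(mbound m : ℤ)) * t := by push_cast at hz ⊢; nlinarith
  have h2 : z / t < -(mbound m : ℤ) := (Int.ediv_lt_iff_lt_mul htz).mpr h1
  exact lt_trans h2 (mbound_spec m (resFin ht z)).1

lemma Xset_closed : ∀ z ∈ Xset ht m, z - t ∈ Xset ht m := by
  intro z hz
  have htz : (0 : ℤ) < t := by exact_mod_cast ht
  have hz' : z - t = (t : ℤ) * (z / t - 1) + ((resFin ht z : ℕ) : ℤ) := by
    have := self_eq_mul_add ht z
    ring_nf
    ring_nf at this
    omega
  have hres : resFin ht (z - t) = resFin ht z := by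
    rw [hz', resFin_mul_add ht]
  have hdiv : (z - t) / t = z / t - 1 := by
    rw [hz', ediv_mul_add ht]
  unfold Xset at hz ⊢
  rw [Set.mem_setOf_eq, hdiv, hres]
  rw [Set.mem_setOf_eq] at hz
  omega

/-- membership of the positive-beads window -/
lemma mem_posWindow (z : ℤ) :
    z ∈ windowFin ht (fun _ => (0 : ℤ)) m ↔ z ∈ Xset ht m ∧ 0 ≤ z := by
  have htz : (0 : ℤ) < t := by exact_mod_cast ht
  rw [mem_windowFin ht]
  have h : (0 : ℤ) ≤ z / t ↔ 0 ≤ z := by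
    rw [Int.le_ediv_iff_mul_le htz, zero_mul]
  unfold Xset
  rw [Set.mem_setOf_eq]
  tauto

/-- membership of the negative-gaps window -/
lemma mem_negWindow (z : ℤ) :
    z ∈ windowFin ht m (fun _ => (0 : ℤ)) ↔ z ∉ Xset ht m ∧ z < 0 := by
  have htz : (0 : ℤ) < t := by exact_mod_cast ht
  rw [mem_windowFin ht]
  have h : z / t < 0 ↔ z < 0 := by
    rw [Int.ediv_lt_iff_lt_mul htz, zero_mul]
  unfold Xset
  rw [Set.mem_setOf_eq]
  constructor
  · rintro ⟨h1, h2⟩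
    exact ⟨by omega, h.mp h2⟩
  · rintro ⟨h1, h2⟩
    exact ⟨by omega, h.mpr h2⟩

/-- membership of the `-K₀`-based window -/
lemma mem_lowWindow (K₀ : ℕ) (z : ℤ) :
    z ∈ windowFin ht (fun _ => -(K₀ : ℤ)) m ↔ z ∈ Xset ht m ∧ -((t * K₀ : ℕ) : ℤ) ≤ z := by
  have htz : (0 : ℤ) < t := by exact_mod_cast ht
  rw [mem_windowFin ht]
  have h : -(K₀ : ℤ) ≤ z / t ↔ -((t * K₀ : ℕ) : ℤ) ≤ z := by
    rw [Int.le_ediv_iff_mul_le htz]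
    push_cast
    constructor <;> intro <;> nlinarith
  unfold Xset
  rw [Set.mem_setOf_eq]
  tauto

lemma charge_cards (hm : (∑ r, m r) = 0) :
    ((windowFin ht (fun _ => (0 : ℤ)) m).card : ℤ)
      = ((windowFin ht m (fun _ => (0 : ℤ))).card : ℤ) := by
  rw [card_windowFin ht, card_windowFin ht]
  push_cast [Nat.cast_sum]
  have key : ∀ r : Fin t, ((m r - 0).toNat : ℤ) - ((0 - m r).toNat : ℤ) = m r := by
    intro r
    omega
  have h1 : ∑ r : Fin t, (((m r - 0).toNat : ℤ) - ((0 - m r).toNat : ℤ)) = 0 := by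
    rw [Finset.sum_congr rfl (fun r _ => key r)]
    exact hm
  rw [Finset.sum_sub_distrib] at h1
  omega

lemma lowWindow_card (K₀ : ℕ) (hm : (∑ r, m r) = 0) (hK₀ : ∀ r, -(K₀ : ℤ) ≤ m r) :
    ((windowFin ht (fun _ => -(K₀ : ℤ)) m).card : ℤ) = (t : ℤ) * K₀ := by
  rw [card_windowFin ht]
  push_cast [Nat.cast_sum]
  have key : ∀ r : Fin t, ((m r - -(K₀ : ℤ)).toNat : ℤ) = m r + K₀ := by
    intro r
    have := hK₀ r
    omega
  rw [Finset.sum_congr rfl (fun r _ => key r), Finset.sum_add_distrib, hm, Finset.sum_const,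
    Finset.card_univ, Fintype.card_fin]
  simp only [nsmul_eq_mul]
  ring

/-- nonnegativity of parts: `enum X i ≥ -i-1` -/
lemma enum_ge (hm : (∑ r, m r) = 0) : ∀ i : ℕ, -(i : ℤ) - 1 ≤ enum (Xset ht m) i := by
  classical
  intro i
  by_contra hc
  push_neg at hc
  have hbdd := Xset_bddAbove ht m
  have hlow := Xset_low ht m
  have hx2 : enum (Xset ht m) i ≤ -(i : ℤ) - 2 := by omega
  set x := enum (Xset ht m) i with hxdef
  -- finsets
  set Bi := (Finset.range i).image (enum (Xset ht m)) with hBidef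
  set P := windowFin ht (fun _ => (0 : ℤ)) m with hPdef
  set G := windowFin ht m (fun _ => (0 : ℤ)) with hGdef
  have hBicard : Bi.card = i := by
    rw [hBidef, Finset.card_image_of_injOn
      ((enum_strictAnti hbdd hlow).injective.injOn), Finset.card_range]
  have hPB : P ⊆ Bi := by
    intro z hz
    rw [hPdef, mem_posWindow ht m] at hz
    rw [hBidef, enum_image_mem hbdd hlow]
    exact ⟨hz.1, by omega⟩
  have hmid : Bi \ P ⊆ Finset.Ioo x 0 := by
    intro z hz
    rw [Finset.mem_sdiff, hBidef, enum_image_mem hbdd hlow, hPdef, mem_posWindow ht m] at hz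
    rw [Finset.mem_Ioo]
    obtain ⟨⟨hz1, hz2⟩, hz3⟩ := hz
    constructor
    · omega
    · by_contra hge
      exact hz3 ⟨hz1, by omega⟩
  have hIoo : Finset.Ioo x 0 ⊆ (Bi \ P) ∪ G := by
    intro z hz
    rw [Finset.mem_Ioo] at hz
    rw [Finset.mem_union, Finset.mem_sdiff, hBidef, enum_image_mem hbdd hlow, hPdef,
      mem_posWindow ht m, hGdef, mem_negWindow ht m]
    by_cases hzX : z ∈ Xset ht m
    · exact Or.inl ⟨⟨hzX, hz.1⟩, fun hcon => by omega⟩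
    · exact Or.inr ⟨hzX, hz.2⟩
  -- counting
  have h1 : Bi.card = (Bi \ P).card + P.card := by
    rw [Finset.card_sdiff_add_card_eq_card hPB]
  have h2 : (Finset.Ioo x 0).card ≤ (Bi \ P).card + G.card :=
    le_trans (Finset.card_le_card hIoo) (Finset.card_union_le _ _)
  have h3 : (Finset.Ioo x 0).card = (0 - x - 1).toNat := Int.card_Ioo x 0
  have h4 := charge_cards ht m hm
  rw [← hPdef, ← hGdef] at h4
  have h5 : ((0 : ℤ) - x - 1).toNat = -x - 1 := by omega
  have h6 : (-x : ℤ) - 1 ≤ ((Bi \ P).card : ℤ) + G.card := by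
    rw [← h5]
    calc (((0 - x - 1).toNat : ℕ) : ℤ) = ((Finset.Ioo x 0).card : ℤ) := by rw [h3]
    _ ≤ (((Bi \ P).card + G.card : ℕ) : ℤ) := by exact_mod_cast h2
    _ = ((Bi \ P).card : ℤ) + G.card := by push_cast; ring
  have h7 : (i : ℤ) = ((Bi \ P).card : ℤ) + P.card := by
    rw [← hBicard]; exact_mod_cast h1
  omega

end XsetFacts

end Backward

section Gpart

variable {t : ℕ}

/-- the partition associated to a vector `m` -/
noncomputable def gpart (ht : 0 < t) (m : Fin t → ℤ) : ℕ → ℕ :=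
  fun i => (enum (Xset ht m) i + i + 1).toNat

variable (ht : 0 < t) (m : Fin t → ℤ) (hm : (∑ r, m r) = 0)

include hm in
lemma gpart_eventually_zero : ∃ i₀, ∀ i, i₀ ≤ i → gpart ht m i = 0 := by
  have hbdd := Xset_bddAbove ht m
  have hlow := Xset_low ht m
  have hex : ∃ i : ℕ, enum (Xset ht m) i + i + 1 ≤ 0 := by
    by_contra hc
    push_neg at hc
    set B : ℕ := mbound m with hBdef
    set W := windowFin ht (fun _ => -(B : ℤ)) m with hWdef
    have hWcard : (W.card : ℤ) = (t : ℤ) * B :=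
      lowWindow_card ht m B hm (fun r => le_of_lt (mbound_spec m r).1)
    set Bi := (Finset.range (t * B + 1)).image (enum (Xset ht m)) with hBidef
    have hBicard : Bi.card = t * B + 1 := by
      rw [hBidef, Finset.card_image_of_injOn
        ((enum_strictAnti hbdd hlow).injective.injOn), Finset.card_range]
    have hsub : Bi ⊆ W := by
      intro z hz
      rw [hBidef, Finset.mem_image] at hz
      obtain ⟨j, hj, rfl⟩ := hz
      rw [Finset.mem_range] at hj
      rw [hWdef, mem_lowWindow ht m]
      refine ⟨enum_mem hbdd hlow j, ?_⟩
      have h1 : enum (Xset ht m) (t * B) ≤ enum (Xset ht m) j :=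
        (enum_strictAnti hbdd hlow).antitone (by omega)
      have h2 := hc (t * B)
      push_cast
      push_cast at h2
      omega
    have hle := Finset.card_le_card hsub
    have hfin : ((t * B + 1 : ℕ) : ℤ) ≤ (W.card : ℤ) := by
      rw [← hBicard]
      exact_mod_cast hle
    push_cast at hfin
    omega
  obtain ⟨i₀, hi₀⟩ := hex
  refine ⟨i₀, fun i hi => ?_⟩
  have hanti : Antitone (fun j : ℕ => enum (Xset ht m) j + j + 1) := by
    apply antitone_nat_of_succ_le
    intro j
    have := enum_succ_lt hbdd hlow j
    push_cast
    omega
  have hv : enum (Xset ht m) i + i + 1 ≤ 0 := le_trans (hanti hi) hi₀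
  unfold gpart
  omega

include hm in
lemma xseq_gpart : xseq (gpart ht m) = enum (Xset ht m) := by
  funext i
  have h1 := enum_ge ht m hm i
  unfold xseq gpart
  omega

include hm in
lemma gpart_isPartition : IsPartition (gpart ht m) := by
  have hbdd := Xset_bddAbove ht m
  have hlow := Xset_low ht m
  constructor
  · apply antitone_nat_of_succ_le
    intro i
    have := enum_succ_lt hbdd hlow i
    unfold gpart
    push_cast
    omega
  · obtain ⟨i₀, hi₀⟩ := gpart_eventually_zero ht m hm
    exact eventually_atTop.mpr ⟨i₀, hi₀⟩

include hm in
lemma gpart_range (z : ℤ) : (∃ i, xseq (gpart ht m) i = z) ↔ z ∈ Xset ht m := by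
  have hbdd := Xset_bddAbove ht m
  have hlow := Xset_low ht m
  rw [xseq_gpart ht m hm]
  constructor
  · rintro ⟨i, rfl⟩
    exact enum_mem hbdd hlow i
  · intro hz
    exact enum_surj hbdd hlow z hz

include hm in
lemma gpart_closed : ∀ i, ∃ i', xseq (gpart ht m) i' = xseq (gpart ht m) i - t := by
  intro i
  have h1 : (∃ j, xseq (gpart ht m) j = xseq (gpart ht m) i) := ⟨i, rfl⟩
  have h2 : xseq (gpart ht m) i ∈ Xset ht m := (gpart_range ht m hm _).mp h1
  have h3 : xseq (gpart ht m) i - t ∈ Xset ht m := Xset_closed ht m _ h2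
  exact (gpart_range ht m hm _).mpr h3

include hm in
lemma gpart_isTCore : IsTCore t (gpart ht m) :=
  (isTCore_iff ht (gpart_isPartition ht m hm)).mpr (gpart_closed ht m hm)

include hm in
lemma crun_gpart : ∀ r, crun t (gpart ht m) r = m r := by
  intro r
  apply int_eq_of_lt_iff
  intro k
  rw [crun_spec ht (gpart_isPartition ht m hm) (gpart_closed ht m hm) r k]
  have h1 : ((t : ℤ) * k + ((r : ℕ) : ℤ)) ∈ Xset ht m ↔ k < m r := by
    unfold Xset
    rw [Set.mem_setOf_eq, ediv_mul_add ht, resFin_mul_add ht]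
  rw [gpart_range ht m hm, h1]

end Gpart

section Main

lemma bridge {t : ℕ} (c : Fin t → ℤ) :
    2 * ((t : ℤ) * ((∑ j, c j * (c j - 1)) / 2) + ∑ j : Fin t, (((j : ℕ) : ℤ) + 1) * c j)
      = ∑ r : Fin t, ((t : ℤ) * (c r * (c r - 1)) + 2 * (((r : ℕ) : ℤ) + 1) * c r) := by
  have heven : Even (∑ j, c j * (c j - 1)) :=
    Finset.even_sum _ (fun r _ => Int.even_mul_pred_self (c r))
  obtain ⟨S, hS⟩ := heven
  have hdiv : (∑ j, c j * (c j - 1)) / 2 = S := by omega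
  have h3 : ∑ r : Fin t, ((t : ℤ) * (c r * (c r - 1)) + 2 * (((r : ℕ) : ℤ) + 1) * c r)
      = (t : ℤ) * (∑ r, c r * (c r - 1)) + 2 * ∑ j : Fin t, (((j : ℕ) : ℤ) + 1) * c j := by
    rw [Finset.sum_add_distrib]
    congr 1
    · rw [← Finset.mul_sum]
    · rw [Finset.mul_sum]
      exact Finset.sum_congr rfl fun r _ => by ring
  rw [hdiv, h3, hS]
  ring

variable {t n : ℕ}

lemma forward_prop (ht : 0 < t) (g : ℕ → ℕ) (hcore : IsTCore t g) (hsize : psize g = n) :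
    (∑ j, crun t g j) = 0 ∧
      (t : ℤ) * ((∑ j, crun t g j * (crun t g j - 1)) / 2) +
        ∑ j : Fin t, (((j : ℕ) : ℤ) + 1) * crun t g j = (n : ℤ) := by
  have hf : IsPartition g := hcore.1
  have hcl := (isTCore_iff ht hf).mp hcore
  obtain ⟨hch, hsz⟩ := charge_and_size ht hf (fun r => crun t g r)
    (fun z => range_iff_crun ht hf hcl z)
  refine ⟨hch, ?_⟩
  have hb := bridge (fun r => crun t g r)
  have h2 : 2 * ((t : ℤ) * ((∑ j, crun t g j * (crun t g j - 1)) / 2) +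
      ∑ j : Fin t, (((j : ℕ) : ℤ) + 1) * crun t g j) = 2 * (n : ℤ) := by
    rw [hb, ← hsz, hsize]
  omega

lemma backward_prop (ht : 0 < t) (m : Fin t → ℤ) (hm : (∑ j, m j) = 0)
    (hmsize : (t : ℤ) * ((∑ j, m j * (m j - 1)) / 2) +
      ∑ j : Fin t, (((j : ℕ) : ℤ) + 1) * m j = (n : ℤ)) :
    IsTCore t (gpart ht m) ∧ psize (gpart ht m) = n := by
  refine ⟨gpart_isTCore ht m hm, ?_⟩
  have hf := gpart_isPartition ht m hm
  have hX : ∀ z : ℤ, (∃ i, xseq (gpart ht m) i = z) ↔ z / t < m (resFin ht z) := by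
    intro z
    rw [gpart_range ht m hm z]
    rfl
  obtain ⟨-, hsz⟩ := charge_and_size ht hf m hX
  have hb := bridge m
  have h2 : 2 * (psize (gpart ht m) : ℤ) = 2 * (n : ℤ) := by
    rw [hsz, ← hb, hmsize]
  have h3 : (psize (gpart ht m) : ℤ) = (n : ℤ) := by omega
  exact_mod_cast h3

lemma left_inverse_prop (ht : 0 < t) (g : ℕ → ℕ) (hcore : IsTCore t g) :
    gpart ht (fun r => crun t g r) = g := by
  have hf : IsPartition g := hcore.1
  have hcl := (isTCore_iff ht hf).mp hcore
  obtain ⟨hch, -⟩ := charge_and_size ht hf (fun r => crun t g r)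
    (fun z => range_iff_crun ht hf hcl z)
  have hgp : IsPartition (gpart ht (fun r => crun t g r)) :=
    gpart_isPartition ht _ hch
  have hrange : Set.range (xseq (gpart ht (fun r => crun t g r))) = Set.range (xseq g) := by
    ext z
    simp only [Set.mem_range]
    rw [gpart_range ht _ hch z]
    unfold Xset
    rw [Set.mem_setOf_eq, ← range_iff_crun ht hf hcl z]
  have hxeq : xseq (gpart ht (fun r => crun t g r)) = xseq g :=
    strictAnti_range_eq (xseq_strictAnti hgp) (xseq_strictAnti hf) hrange
  funext i
  have := congrFun hxeq i
  unfold xseq at this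
  omega

theorem stmt8_aux (t n : ℕ) (ht : 0 < t) :
    Nat.card {g : ℕ → ℕ // IsTCore t g ∧ psize g = n} =
      Nat.card {m : Fin t → ℤ // (∑ j, m j) = 0 ∧
        (t : ℤ) * ((∑ j, m j * (m j - 1)) / 2) +
          ∑ j : Fin t, (((j : ℕ) : ℤ) + 1) * m j = (n : ℤ)} := by
  apply Nat.card_congr
  exact {
    toFun := fun g => ⟨fun r => crun t g.1 r, forward_prop ht g.1 g.2.1 g.2.2⟩
    invFun := fun mm => ⟨gpart ht mm.1, backward_prop ht mm.1 mm.2.1 mm.2.2⟩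
    left_inv := fun g => Subtype.ext (left_inverse_prop ht g.1 g.2.1)
    right_inv := fun mm => Subtype.ext (funext fun r => crun_gpart ht mm.1 mm.2.1 r) }

end Main

end Core8

/-- The number of `t`-core partitions of `n` equals the number of vectors
`(m_1,…,m_t) ∈ ℤ^t` with `Σ m_j = 0` and `t·Σ m_j(m_j-1)/2 + Σ j·m_j = n`. -/
theorem stmt8 (t n : ℕ) (ht : 0 < t) :
    Nat.card {g : ℕ → ℕ // IsTCore t g ∧ psize g = n} =
      Nat.card {m : Fin t → ℤ // (∑ j, m j) = 0 ∧
        (t : ℤ) * ((∑ j, m j * (m j - 1)) / 2) +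
          ∑ j : Fin t, (((j : ℕ) : ℤ) + 1) * m j = (n : ℤ)} := by
  exact Core8.stmt8_aux t n ht
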